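/- If the common action set 𝒳 ⊆ ℝ^d is nonempty, compact, and convex, then the Battling Influencers Game has at least one pure Nash equilibrium. -/

import Mathlib

open scoped RealInnerProductSpace

noncomputable section

/-- Player `i`'s loss in the Battling Influencers Game:
`ℓ_i(x) = ‖w_0 x_0 + ∑_{j=1}^n w_j x_j − t_i‖₂²`. -/
def loss {d n : ℕ} (w0 : ℝ) (x0 : EuclideanSpace ℝ (Fin d)) (w : Fin n → ℝ)
    (t : Fin n → EuclideanSpace ℝ (Fin d)) (i : Fin n)
    (x : Fin n → EuclideanSpace ℝ (Fin d)) : ℝ :=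
  ‖w0 • x0 + (∑ j, w j • x j) - t i‖ ^ 2

/-- A pure Nash equilibrium of the Battling Influencers Game with common action
set `X`: every player plays in `X` and no player can strictly decrease its own
loss by a unilateral deviation inside `X`. -/
def IsPureNE {d n : ℕ} (X : Set (EuclideanSpace ℝ (Fin d))) (w0 : ℝ)
    (x0 : EuclideanSpace ℝ (Fin d)) (w : Fin n → ℝ)
    (t : Fin n → EuclideanSpace ℝ (Fin d))
    (x : Fin n → EuclideanSpace ℝ (Fin d)) : Prop :=
  (∀ i, x i ∈ X) ∧
    ∀ i, ∀ y ∈ X, loss w0 x0 w t i x ≤ loss w0 x0 w t i (Function.update x i y)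

/-- If the common action set `𝒳` is nonempty, compact, and convex, then the
Battling Influencers Game has at least one pure Nash equilibrium. -/
theorem exists_pNE {d n : ℕ} (X : Set (EuclideanSpace ℝ (Fin d)))
    (hne : X.Nonempty) (hcpt : IsCompact X) (hcvx : Convex ℝ X)
    (w0 : ℝ) (x0 : EuclideanSpace ℝ (Fin d)) (w : Fin n → ℝ)
    (t : Fin n → EuclideanSpace ℝ (Fin d)) :
    ∃ x : Fin n → EuclideanSpace ℝ (Fin d), IsPureNE X w0 x0 w t x := by
  classical
  set A : (Fin n → EuclideanSpace ℝ (Fin d)) → EuclideanSpace ℝ (Fin d) :=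
    fun z => w0 • x0 + ∑ j, w j • z j with hA
  set Φ : (Fin n → EuclideanSpace ℝ (Fin d)) → ℝ :=
    fun z => ‖A z‖ ^ 2 - 2 * ∑ j, w j * ⟪z j, t j⟫ with hΦ
  have hcont : Continuous Φ := by
    apply Continuous.sub
    · apply Continuous.pow
      apply Continuous.norm
      exact continuous_const.add (continuous_finset_sum _ fun j _ =>
        by fun_prop)
    · exact continuous_const.mul (continuous_finset_sum _ fun j _ =>
        continuous_const.mul ((continuous_apply j).inner continuous_const))
  set S : Set (Fin n → EuclideanSpace ℝ (Fin d)) := Set.pi Set.univ fun _ => X with hS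
  have hScpt : IsCompact S := isCompact_univ_pi fun _ => hcpt
  obtain ⟨c, hc⟩ := hne
  have hSne : S.Nonempty := ⟨fun _ => c, fun j _ => hc⟩
  obtain ⟨x, hxS, hxmin⟩ := hScpt.exists_isMinOn hSne hcont.continuousOn
  have hxX : ∀ i, x i ∈ X := fun i => hxS i (Set.mem_univ i)
  refine ⟨x, hxX, fun i y hy => ?_⟩
  set x' := Function.update x i y with hx'
  have hx'S : x' ∈ S := by
    intro j _
    by_cases h : j = i
    · subst h; simpa [hx'] using hy
    · simpa [hx', Function.update_of_ne h] using hxX j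
  have hΦle : Φ x ≤ Φ x' := hxmin hx'S
  -- sum difference identities
  have hsum1 : (∑ j, w j • x' j) = (∑ j, w j • x j) + (w i • y - w i • x i) := by
    have : (∑ j, (w j • x' j - w j • x j)) = w i • y - w i • x i := by
      rw [Finset.sum_eq_single_of_mem i (Finset.mem_univ i)]
      · simp [hx']
      · intro j _ hj
        simp [hx', Function.update_of_ne hj]
    rw [Finset.sum_sub_distrib] at this
    linear_combination (norm := abel) this
  have hsum2 : (∑ j, w j * ⟪x' j, t j⟫) =
      (∑ j, w j * ⟪x j, t j⟫) + (w i * ⟪y, t i⟫ - w i * ⟪x i, t i⟫) := by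
    have : (∑ j, (w j * ⟪x' j, t j⟫ - w j * ⟪x j, t j⟫)) =
        w i * ⟪y, t i⟫ - w i * ⟪x i, t i⟫ := by
      rw [Finset.sum_eq_single_of_mem i (Finset.mem_univ i)]
      · simp [hx']
      · intro j _ hj
        simp [hx', Function.update_of_ne hj]
    rw [Finset.sum_sub_distrib] at this
    linarith
  have hAs : A x' = A x + (w i • y - w i • x i) := by
    simp only [hA, hsum1]; abel
  have hinner : ⟪A x', t i⟫ = ⟪A x, t i⟫ + (w i * ⟪y, t i⟫ - w i * ⟪x i, t i⟫) := by
    rw [hAs, inner_add_left, inner_sub_left, real_inner_smul_left, real_inner_smul_left]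
  have hlx : loss w0 x0 w t i x = ‖A x‖ ^ 2 - 2 * ⟪A x, t i⟫ + ‖t i‖ ^ 2 := by
    rw [loss, ← norm_sub_sq_real]
  have hlx' : loss w0 x0 w t i x' = ‖A x'‖ ^ 2 - 2 * ⟪A x', t i⟫ + ‖t i‖ ^ 2 := by
    rw [loss, ← norm_sub_sq_real]
  have hΦx : Φ x = ‖A x‖ ^ 2 - 2 * ∑ j, w j * ⟪x j, t j⟫ := rfl
  have hΦx' : Φ x' = ‖A x'‖ ^ 2 - 2 * ∑ j, w j * ⟪x' j, t j⟫ := rfl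
  rw [hlx, hlx', hinner]
  rw [hΦx, hΦx', hsum2] at hΦle
  linarith

end
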